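/- Let r ≥ 5 and let k < r be natural numbers. Then every group homomorphism from the alternating group alternatingGroup (Fin r) to the symmetric group Equiv.Perm (Fin k) is trivial, i.e. sends every element to the identity. -/

import Mathlib

open Equiv Equiv.Perm

set_option maxHeartbeats 1600000 in
/-- Auxiliary: a nontrivial normal subgroup of `alternatingGroup (Fin r)`, `r ≥ 5`,
contains a three-cycle. -/
theorem aux_three_cycle_mem {r : ℕ} (hr : 5 ≤ r)
    (N : Subgroup (alternatingGroup (Fin r))) [hN : N.Normal]
    (g : alternatingGroup (Fin r)) (hgN : g ∈ N) (hg1 : g ≠ 1) :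
    ∃ f : alternatingGroup (Fin r), IsThreeCycle (f : Perm (Fin r)) ∧ f ∈ N := by
  classical
  set gp : Perm (Fin r) := (g : Perm (Fin r)) with hgp
  -- find a moved point
  have hgp1 : gp ≠ 1 := fun h => hg1 (Subtype.ext h)
  obtain ⟨a, ha⟩ : ∃ a, gp a ≠ a := by
    by_contra hcon
    push_neg at hcon
    exact hgp1 (Equiv.ext fun x => hcon x)
  set b : Fin r := gp a with hb
  -- pick c outside {a, b, gp b}
  have hcompl : (({a, b, gp b} : Finset (Fin r))ᶜ).Nonempty := by
    rw [← Finset.card_pos, Finset.card_compl]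
    have h3 : ({a, b, gp b} : Finset (Fin r)).card ≤ 3 := by
      refine (Finset.card_insert_le _ _).trans (Nat.succ_le_succ ?_)
      refine (Finset.card_insert_le _ _).trans (Nat.succ_le_succ ?_)
      simp
    have hcard : Fintype.card (Fin r) = r := Fintype.card_fin r
    omega
  obtain ⟨c, hc⟩ := hcompl
  simp only [Finset.mem_compl, Finset.mem_insert, Finset.mem_singleton, not_or] at hc
  obtain ⟨hca, hcb, hcgb⟩ := hc
  have hca' : a ≠ c := Ne.symm hca
  have hcb' : b ≠ c := Ne.symm hcb
  have hab : a ≠ b := fun h => ha h.symm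
  -- the three-cycle σ : a ↦ b ↦ c ↦ a
  set σ : Perm (Fin r) := swap a c * swap a b with hσdef
  have hσ3 : IsThreeCycle σ := isThreeCycle_swap_mul_swap_same hca' hab hcb
  have hσmem : σ ∈ alternatingGroup (Fin r) := mem_alternatingGroup.2 hσ3.sign
  have hσa : σ a = b := by
    simp only [hσdef, Perm.mul_apply, swap_apply_left]
    exact swap_apply_of_ne_of_ne (Ne.symm hab) (Ne.symm hcb)
  have hσb : σ b = c := by
    simp only [hσdef, Perm.mul_apply, swap_apply_right, swap_apply_left]
  -- the commutator: small support, nontrivial, in N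
  set σ' : alternatingGroup (Fin r) := ⟨σ, hσmem⟩ with hσ'
  set h : alternatingGroup (Fin r) := σ' * g * σ'⁻¹ * g⁻¹ with hh
  have hhN : h ∈ N := by
    have h1 : σ' * g * σ'⁻¹ ∈ N := hN.conj_mem g hgN σ'
    exact mul_mem h1 (inv_mem hgN)
  set hp : Perm (Fin r) := σ * gp * σ⁻¹ * gp⁻¹ with hpdef
  have hcoeh : (h : Perm (Fin r)) = hp := rfl
  -- hp moves gp b to c
  have hmoves : hp (gp b) = c := by
    have hσinvb : σ⁻¹ b = a := by rw [← hσa]; simp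
    simp [hpdef, Perm.mul_apply, hσinvb, ← hb, hσb]
  have hp1 : hp ≠ 1 := by
    intro hcon
    rw [hcon] at hmoves
    exact hcgb hmoves.symm
  have h1 : h ≠ 1 := fun hcon => hp1 (by rw [← hcoeh, hcon]; rfl)
  -- support of hp is inside S with |S| ≤ 5
  set S : Finset (Fin r) := {a, b, c, gp b, gp c} with hS
  have hσsupp : σ.support ⊆ ({a, b, c} : Finset (Fin r)) := by
    refine (support_mul_le _ _).trans ?_
    rw [support_swap hca', support_swap hab]
    intro x hx
    simp only [Finset.sup_eq_union, Finset.mem_union, Finset.mem_insert,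
      Finset.mem_singleton] at hx
    simp only [Finset.mem_insert, Finset.mem_singleton]
    tauto
  have hconjsupp : (gp * σ⁻¹ * gp⁻¹).support ⊆ ({b, gp b, gp c} : Finset (Fin r)) := by
    rw [support_conj, support_inv]
    intro x hx
    simp only [Finset.mem_map, toEmbedding_apply] at hx
    obtain ⟨y, hy, rfl⟩ := hx
    have := hσsupp hy
    simp only [Finset.mem_insert, Finset.mem_singleton] at this ⊢
    rcases this with rfl | rfl | rfl
    · left; exact hb.symm ▸ rfl
    · right; left; rfl
    · right; right; rfl
  have hsupp : hp.support ⊆ S := by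
    have hassoc : hp = σ * (gp * σ⁻¹ * gp⁻¹) := by
      rw [hpdef]; simp only [mul_assoc]
    rw [hassoc]
    refine (support_mul_le _ _).trans ?_
    intro x hx
    simp only [Finset.sup_eq_union, Finset.mem_union] at hx
    rcases hx with hx | hx
    · have := hσsupp hx
      simp only [Finset.mem_insert, Finset.mem_singleton] at this
      simp only [hS, Finset.mem_insert, Finset.mem_singleton]
      tauto
    · have := hconjsupp hx
      simp only [Finset.mem_insert, Finset.mem_singleton] at this
      simp only [hS, Finset.mem_insert, Finset.mem_singleton]
      tauto
  have hS5 : S.card ≤ 5 := by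
    refine (Finset.card_insert_le _ _).trans (Nat.succ_le_succ ?_)
    refine (Finset.card_insert_le _ _).trans (Nat.succ_le_succ ?_)
    refine (Finset.card_insert_le _ _).trans (Nat.succ_le_succ ?_)
    refine (Finset.card_insert_le _ _).trans (Nat.succ_le_succ ?_)
    simp
  -- enlarge to a 5-element set t containing the support
  obtain ⟨t, hSt, -, ht5⟩ :=
    Finset.exists_subsuperset_card_eq (Finset.subset_univ S) hS5
      (by rw [Finset.card_univ, Fintype.card_fin]; exact hr)
  have hsuppt : hp.support ⊆ t := hsupp.trans hSt
  -- hp preserves t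
  have hmem : ∀ x, x ∈ t ↔ hp x ∈ t := by
    intro x
    by_cases hx : x ∈ hp.support
    · exact iff_of_true (hsuppt hx) (hsuppt (apply_mem_support.2 hx))
    · rw [notMem_support.1 hx]
  -- transfer to Perm (Fin 5)
  set f₅ : Fin 5 ≃ {x : Fin r // x ∈ t} := (t.equivFinOfCardEq ht5).symm with hf₅
  set Φ : Perm (Fin 5) →* Perm (Fin r) := extendDomainHom f₅ with hΦ
  set h₀ : Perm (Fin 5) := f₅.symm.permCongr (hp.subtypePerm (fun x => (hmem x).symm)) with hh₀
  have hΦh₀ : Φ h₀ = hp := by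
    apply Equiv.ext
    intro x
    by_cases hx : x ∈ t
    · rw [hΦ, extendDomainHom_apply, extendDomain_apply_subtype _ _ hx]
      simp [hh₀, subtypePerm_apply]
    · rw [hΦ, extendDomainHom_apply, extendDomain_apply_not_subtype _ _ hx]
      exact (notMem_support.1 (fun hmem' => hx (hsuppt hmem'))).symm
  -- maps to alternating group
  have hsign : ∀ π : Perm (Fin 5), Perm.sign (Φ π) = Perm.sign π := by
    intro π
    rw [hΦ, extendDomainHom_apply]
    exact sign_extendDomain π f₅
  have hΦalt : ∀ π : alternatingGroup (Fin 5), Φ (π : Perm (Fin 5)) ∈ alternatingGroup (Fin r) :=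
    fun π => mem_alternatingGroup.2 (by rw [hsign]; exact mem_alternatingGroup.1 π.2)
  set Φ' : alternatingGroup (Fin 5) →* alternatingGroup (Fin r) :=
    MonoidHom.codRestrict (Φ.comp (alternatingGroup (Fin 5)).subtype) _ hΦalt with hΦ'
  -- the pulled-back subgroup
  set N₀ : Subgroup (alternatingGroup (Fin 5)) := N.comap Φ' with hN₀
  haveI : N₀.Normal := hN.comap Φ'
  have hh₀alt : h₀ ∈ alternatingGroup (Fin 5) := by
    rw [mem_alternatingGroup, ← hsign h₀, hΦh₀, ← hcoeh]
    exact mem_alternatingGroup.1 h.2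
  have hx₀mem : (⟨h₀, hh₀alt⟩ : alternatingGroup (Fin 5)) ∈ N₀ := by
    rw [hN₀, Subgroup.mem_comap]
    have : Φ' ⟨h₀, hh₀alt⟩ = h := Subtype.ext (hΦh₀.trans hcoeh.symm)
    rw [this]
    exact hhN
  have hx₀ne : (⟨h₀, hh₀alt⟩ : alternatingGroup (Fin 5)) ≠ 1 := by
    intro hcon
    apply hp1
    rw [← hΦh₀, show h₀ = 1 from congrArg Subtype.val hcon, map_one]
  have hN₀top : N₀ = ⊤ := by
    rcases Subgroup.Normal.eq_bot_or_eq_top ‹N₀.Normal› with hbot | htop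
    · exfalso
      rw [hbot, Subgroup.mem_bot] at hx₀mem
      exact hx₀ne hx₀mem
    · exact htop
  -- a three-cycle in Perm (Fin 5)
  have h012 : (0 : Fin 5) ≠ 1 ∧ (0 : Fin 5) ≠ 2 ∧ (1 : Fin 5) ≠ 2 := by decide
  set τ : Perm (Fin 5) := swap 0 1 * swap 0 2 with hτ
  have hτ3 : IsThreeCycle τ := isThreeCycle_swap_mul_swap_same h012.1 h012.2.1 h012.2.2
  have hτalt : τ ∈ alternatingGroup (Fin 5) := mem_alternatingGroup.2 hτ3.sign
  have hτN₀ : (⟨τ, hτalt⟩ : alternatingGroup (Fin 5)) ∈ N₀ := by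
    rw [hN₀top]; exact Subgroup.mem_top _
  rw [hN₀, Subgroup.mem_comap] at hτN₀
  refine ⟨Φ' ⟨τ, hτalt⟩, ?_, hτN₀⟩
  have hcoe : (Φ' ⟨τ, hτalt⟩ : Perm (Fin r)) = Φ τ := rfl
  rw [hcoe]
  rw [← card_support_eq_three_iff, hΦ, extendDomainHom_apply,
    card_support_extend_domain]
  exact hτ3.card_support

/-- For `r ≥ 5` and `k < r`, every homomorphism from the alternating group
on `r` letters to the symmetric group on `k` letters is trivial. -/
theorem stmt_3 (r k : ℕ) (hr : 5 ≤ r) (hk : k < r)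
    (φ : alternatingGroup (Fin r) →* Equiv.Perm (Fin k)) :
    ∀ x, φ x = 1 := by
  classical
  haveI : Nontrivial (Fin r) := Fin.nontrivial_iff_two_le.mpr (by omega)
  -- the kernel is nontrivial by cardinality
  have hker_ne_bot : φ.ker ≠ ⊥ := by
    intro hbot
    have hinj : Function.Injective φ := (MonoidHom.ker_eq_bot_iff φ).mp hbot
    have hcard := Fintype.card_le_of_injective φ hinj
    have h2 : 2 * Fintype.card (alternatingGroup (Fin r)) = r.factorial := by
      rw [two_mul_card_alternatingGroup, Fintype.card_perm, Fintype.card_fin]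
    have hkc : Fintype.card (Perm (Fin k)) = k.factorial := by
      rw [Fintype.card_perm, Fintype.card_fin]
    have hle : k.factorial ≤ (r - 1).factorial := Nat.factorial_le (by omega)
    have hbig : 5 * (r - 1).factorial ≤ r.factorial := by
      have hrfac : r.factorial = r * (r - 1).factorial := by
        conv_lhs => rw [show r = (r - 1) + 1 by omega]
        rw [Nat.factorial_succ]
        congr 1
        omega
      rw [hrfac]
      exact Nat.mul_le_mul_right _ hr
    have hpos : 0 < Fintype.card (alternatingGroup (Fin r)) := Fintype.card_pos
    omega
  obtain ⟨g, hgN, hg1⟩ : ∃ g ∈ φ.ker, g ≠ 1 := by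
    by_contra hcon
    push_neg at hcon
    exact hker_ne_bot ((Subgroup.eq_bot_iff_forall _).2 hcon)
  obtain ⟨f, hf3, hfN⟩ := aux_three_cycle_mem hr φ.ker g hgN hg1
  have h5 : 5 ≤ Fintype.card (Fin r) := by rw [Fintype.card_fin]; exact hr
  have hker_top : φ.ker = ⊤ := by
    refine le_antisymm le_top ?_
    rw [← hf3.alternating_normalClosure (by rw [Nat.card_eq_fintype_card]; exact h5)]
    refine Subgroup.normalClosure_le_normal ?_
    rw [Set.singleton_subset_iff, SetLike.mem_coe]
    have : (⟨(f : Perm (Fin r)), hf3.mem_alternatingGroup⟩ : alternatingGroup (Fin r)) = f :=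
      Subtype.ext rfl
    rw [this]
    exact hfN
  intro x
  have : x ∈ φ.ker := hker_top ▸ Subgroup.mem_top x
  exact this
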